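/- Let T be a spanning tree of a finite connected simple graph rooted at r, with its vertex set partitioned into fragments each inducing a connected subgraph of T. Let x ∈ F_i, y ∈ F_j with i ≠ j, and let z = LCA(x,y). If z ∈ F_i, then F_j ⊆ z↓, and moreover z is the lowest ancestor of x whose descendant set contains F_j: for every vertex u that is an ancestor of x with u ∈ z↓ and u ≠ z, we have F_j ⊄ u↓. -/

import Mathlib

open Finset
open scoped Classical

noncomputable section

variable {V : Type*} [Fintype V] [DecidableEq V]

/-- `Desc T r v u` : `u` is a descendant of `v` in the tree `T` rooted at `r`,
i.e. `v` lies on the unique path in `T` from `r` to `u` (includes `u = v`). -/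
def Desc (T : SimpleGraph V) (r v u : V) : Prop :=
  ∀ p : T.Walk r u, p.IsPath → v ∈ p.support

/-- `descSet T r v` is `v↓`, the set of descendants of `v` in `T` rooted at `r`. -/
def descSet (T : SimpleGraph V) (r v : V) : Set V := {u | Desc T r v u}

/-- `IsLCA T r z x y` : `z` is the least common ancestor of `x` and `y` in `T`
rooted at `r`: `z` is a common ancestor of maximal depth (distance from `r`). -/
def IsLCA (T : SimpleGraph V) (r z x y : V) : Prop :=
  Desc T r z x ∧ Desc T r z y ∧
    ∀ u, Desc T r u x → Desc T r u y → T.dist r u ≤ T.dist r z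

/-- `cutw G w S` : total weight of edges of `G` with exactly one endpoint in `S`
(each such edge `{x,y}` with `x ∈ S`, `y ∉ S` is counted once, as the ordered
pair `(x, y)`). -/
def cutw (G : SimpleGraph V) (w : V → V → ℝ) (S : Set V) : ℝ :=
  ∑ x, ∑ y, if x ∈ S ∧ y ∉ S ∧ G.Adj x y then w x y else 0

/-- `degw G w v` : the weighted degree `δ(v)` of `v` in `G`. -/
def degw (G : SimpleGraph V) (w : V → V → ℝ) (v : V) : ℝ :=
  ∑ u, if G.Adj u v then w u v else 0

/-- `rhoLCA G T w r v` : `ρ(v)`, the total weight of edges of `G` whose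
endpoints' least common ancestor in `T` (rooted at `r`) is `v`.  Each edge is
counted as two ordered pairs, whence the division by `2`. -/
def rhoLCA (G T : SimpleGraph V) (w : V → V → ℝ) (r v : V) : ℝ :=
  (∑ x, ∑ y, if G.Adj x y ∧ IsLCA T r v x y then w x y else 0) / 2

/-- `degDown G T w r v` : `δ↓(v) = Σ_{u ∈ v↓} δ(u)`. -/
def degDown (G T : SimpleGraph V) (w : V → V → ℝ) (r v : V) : ℝ :=
  ∑ u, if Desc T r v u then degw G w u else 0

/-- `rhoDown G T w r v` : `ρ↓(v) = Σ_{u ∈ v↓} ρ(u)`. -/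
def rhoDown (G T : SimpleGraph V) (w : V → V → ℝ) (r v : V) : ℝ :=
  ∑ u, if Desc T r v u then rhoLCA G T w r u else 0


section Aux

variable {V : Type*} [Fintype V] [DecidableEq V]

open SimpleGraph

lemma desc_iff_mem_support {T : SimpleGraph V} (hT : T.IsTree) {r v u : V}
    (p : T.Walk r u) (hp : p.IsPath) : Desc T r v u ↔ v ∈ p.support := by
  constructor
  · exact fun h => h p hp
  · intro hv q hq
    obtain ⟨p', -, hu⟩ := hT.existsUnique_path r u
    rwa [hu q hq, ← hu p hp]

lemma path_length_eq_dist {T : SimpleGraph V} (hT : T.IsTree) {a b : V}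
    (p : T.Walk a b) (hp : p.IsPath) : p.length = T.dist a b := by
  refine le_antisymm ?_ (SimpleGraph.dist_le p)
  obtain ⟨q, hq⟩ := hT.isConnected.exists_walk_length_eq_dist a b
  obtain ⟨p', -, hu⟩ := hT.existsUnique_path a b
  have : p = q.bypass := by rw [hu p hp, hu q.bypass q.bypass_isPath]
  calc p.length = q.bypass.length := by rw [this]
    _ ≤ q.length := q.length_bypass_le
    _ = T.dist a b := hq

lemma desc_step {T : SimpleGraph V} (hT : T.IsTree) {r z y w : V}
    (hzy : Desc T r z y) (hne : z ≠ y) (hadj : T.Adj y w) : Desc T r z w := by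
  obtain ⟨p, hp, -⟩ := hT.existsUnique_path r y
  have hzp : z ∈ p.support := hzy p hp
  by_cases hw : w ∈ p.support
  · have hq : (p.takeUntil w hw).IsPath := hp.takeUntil hw
    rw [desc_iff_mem_support hT _ hq]
    have hspec := p.take_spec hw
    have hz2 : z ∈ (p.takeUntil w hw).support ∨ z ∈ (p.dropUntil w hw).support := by
      rw [← SimpleGraph.Walk.mem_support_append_iff, hspec]; exact hzp
    rcases hz2 with h | h
    · exact h
    · have hd : (p.dropUntil w hw).IsPath := hp.dropUntil hw
      have hedge : (SimpleGraph.Walk.cons hadj.symm SimpleGraph.Walk.nil :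
          T.Walk w y).IsPath := by simp [hadj.symm.ne]
      have heq : p.dropUntil w hw =
          SimpleGraph.Walk.cons hadj.symm SimpleGraph.Walk.nil := by
        obtain ⟨p', -, hu⟩ := hT.existsUnique_path w y
        rw [hu _ hd, hu _ hedge]
      rw [heq] at h
      simp only [SimpleGraph.Walk.support_cons, SimpleGraph.Walk.support_nil,
        List.mem_cons, List.mem_singleton] at h
      rcases h with h | h | h
      · exact h ▸ (p.takeUntil w hw).end_mem_support
      · exact absurd h hne
      · simp at h
  · have hc : (p.concat hadj).IsPath := by
      rw [SimpleGraph.Walk.isPath_def, SimpleGraph.Walk.support_concat,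
        List.nodup_append']
      refine ⟨hp.support_nodup, List.nodup_singleton w, ?_⟩
      intro a ha hb
      simp only [List.mem_singleton] at hb
      exact hw (hb ▸ ha)
    rw [desc_iff_mem_support hT _ hc, SimpleGraph.Walk.support_concat,
      List.mem_append]
    exact Or.inl hzp

lemma desc_of_walk {T : SimpleGraph V} (hT : T.IsTree) {r z y w : V}
    (hzy : Desc T r z y) (q : T.Walk y w) (hzq : z ∉ q.support) : Desc T r z w := by
  induction q with
  | nil => exact hzy
  | @cons a b c h q ih =>
    simp only [SimpleGraph.Walk.support_cons, List.mem_cons] at hzq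
    push_neg at hzq
    exact ih (desc_step hT hzy hzq.1 h) hzq.2

end Aux

/-- for a fragment decomposition of the spanning tree `T`
rooted at `r`, if `x ∈ F i`, `y ∈ F j` with `i ≠ j` and `z = LCA(x, y)` lies in
`F i`, then `F j ⊆ z↓` and `z` is the lowest ancestor of `x` whose descendant
set contains `F j`: every ancestor `u` of `x` with `u ∈ z↓`, `u ≠ z` has
`F j ⊄ u↓`. -/
theorem stmt11 (G T : SimpleGraph V) (hG : G.Connected)
    (hT : T.IsTree) (hTG : T ≤ G)
    (r : V) (k : ℕ) (F : Fin k → Set V)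
    (hne : ∀ i, (F i).Nonempty)
    (hdisj : ∀ i j, i ≠ j → Disjoint (F i) (F j))
    (hcover : (⋃ i, F i) = Set.univ)
    (hconn : ∀ i, (T.induce (F i)).Connected)
    (x y z : V) (i j : Fin k) (hij : i ≠ j) (hx : x ∈ F i) (hy : y ∈ F j)
    (hz : IsLCA T r z x y) (hzFi : z ∈ F i) :
    F j ⊆ descSet T r z ∧
      ∀ u, Desc T r u x → u ∈ descSet T r z → u ≠ z →
        ¬ F j ⊆ descSet T r u := by
  classical
  have hzj : z ∉ F j := fun hzj => (hdisj i j hij).le_bot ⟨hzFi, hzj⟩ |>.elim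
  have key : F j ⊆ descSet T r z := by
    intro w hw
    obtain ⟨q0⟩ := ((hconn j) ⟨y, hy⟩ ⟨w, hw⟩)
    let f : T.induce (F j) →g T := (SimpleGraph.Embedding.induce (F j)).toHom
    have hq : ∀ a ∈ (q0.map f).support, a ∈ F j := by
      intro a ha
      rw [SimpleGraph.Walk.support_map] at ha
      obtain ⟨b, -, rfl⟩ := List.mem_map.mp ha
      exact b.2
    have hz' : z ∉ (q0.map f).support := fun h => hzj (hq z h)
    exact desc_of_walk hT hz.2.1 (q0.map f) hz'
  refine ⟨key, ?_⟩
  intro u hux hu hne hFj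
  have huy : Desc T r u y := hFj hy
  have hle : T.dist r u ≤ T.dist r z := hz.2.2 u hux huy
  obtain ⟨p, hp, -⟩ := hT.existsUnique_path r u
  have hzp : z ∈ p.support := hu p hp
  have h1 : (p.takeUntil z hzp).length = T.dist r z :=
    path_length_eq_dist hT _ (hp.takeUntil hzp)
  have hlen : p.length = T.dist r u := path_length_eq_dist hT p hp
  have hspec := p.take_spec hzp
  have hsum : (p.takeUntil z hzp).length + (p.dropUntil z hzp).length = p.length := by
    rw [← SimpleGraph.Walk.length_append, hspec]
  have hpos : 0 < (p.dropUntil z hzp).length := by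
    rcases Nat.eq_zero_or_pos (p.dropUntil z hzp).length with h0 | h
    · exact absurd (SimpleGraph.Walk.eq_of_length_eq_zero h0).symm hne
    · exact h
  omega

end
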